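/- If λ ≠ 0, then the only solution in L^p[0,1] to the integro-differential equation λ f'(x) = 2 f(x) + β (β a real constant determined by a Fredholm condition), arising from λf = Af with A the constrained selection gradient, is f = 0; i.e., A has no nonzero eigenvalues. -/

import Mathlib

open MeasureTheory intervalIntegral ENNReal

lemma psi_pos {s : ℝ} (hs : 0 < s) :
    0 < (1+s)*Real.exp (-s) - (1-s)*Real.exp s := by
  set ψ : ℝ → ℝ := fun t => (1+t)*Real.exp (-t) - (1-t)*Real.exp t with hψ
  have hder : ∀ t : ℝ, HasDerivAt ψ (t * (Real.exp t - Real.exp (-t))) t := by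
    intro t
    have h1 : HasDerivAt (fun t : ℝ => (1+t)*Real.exp (-t)) (-t * Real.exp (-t)) t := by
      have he : HasDerivAt (fun t : ℝ => Real.exp (-t)) (-Real.exp (-t)) t := by
        exact ((Real.hasDerivAt_exp (-t)).comp t (hasDerivAt_neg t)).congr_deriv (by simp)
      have := ((hasDerivAt_id t).const_add 1).mul he
      refine this.congr_deriv ?_; simp [id_eq]; ring
    have h2 : HasDerivAt (fun t : ℝ => (1-t)*Real.exp t) (-t * Real.exp t) t := by
      have := ((hasDerivAt_id t).const_sub 1).mul (Real.hasDerivAt_exp t)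
      refine this.congr_deriv ?_; simp [id_eq]; ring
    have := h1.sub h2
    refine this.congr_deriv ?_; simp [id_eq]; ring
  have hmono : StrictMonoOn ψ (Set.Ici 0) := by
    refine strictMonoOn_of_deriv_pos (convex_Ici 0) ?_ ?_
    · exact (Continuous.continuousOn (by fun_prop))
    · intro t ht
      rw [interior_Ici] at ht
      rw [(hder t).deriv]
      have : Real.exp (-t) < Real.exp t := Real.exp_lt_exp.2 (by linarith [ht.out])
      have ht' : (0:ℝ) < t := ht
      nlinarith
  have h0 : ψ 0 = 0 := by simp [hψ]
  have := hmono (Set.self_mem_Ici) (Set.mem_Ici.2 hs.le) hs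
  rw [h0] at this
  exact this

lemma phi_ne {s : ℝ} (hs : s ≠ 0) : (s-1)*Real.exp (2*s) + s + 1 ≠ 0 := by
  have key : ∀ t : ℝ, 0 < t → 0 < (t-1)*Real.exp (2*t) + t + 1 := by
    intro t ht
    have h := psi_pos ht
    have he : Real.exp t * Real.exp (-t) = 1 := by
      rw [← Real.exp_add]; simp
    have he2 : Real.exp t * Real.exp t = Real.exp (2*t) := by
      rw [← Real.exp_add]; ring_nf
    have hep : 0 < Real.exp t := Real.exp_pos t
    nlinarith
  rcases lt_or_gt_of_ne hs with h | h
  · have hpos := key (-s) (by linarith)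
    have he : Real.exp (2*s) * Real.exp (2*(-s)) = 1 := by
      rw [← Real.exp_add]; ring_nf; simp
    have hep : 0 < Real.exp (2*s) := Real.exp_pos _
    intro hc
    nlinarith
  · exact ne_of_gt (key s h)

/-- The selection gradient `∇E(f)(x) = ∫₀ˣ f − ∫ₓ¹ f`. -/
noncomputable def gradE (f : ℝ → ℝ) (x : ℝ) : ℝ :=
  (∫ y in (0:ℝ)..x, f y) - ∫ y in x..(1:ℝ), f y

/-- The Heaviside function: `1` for `t ≥ 0`, `0` for `t < 0`. -/
noncomputable def heav (t : ℝ) : ℝ := if 0 ≤ t then 1 else 0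

/-- The MCA-constraint functional `w(f) = ∫₀¹ (x − 1/2) f(x) dx`. -/
noncomputable def wfun (f : ℝ → ℝ) : ℝ := ∫ x in (0:ℝ)..1, (x - 1/2) * f x

/-- The constrained selection gradient `A`. -/
noncomputable def Aop (f : ℝ → ℝ) (x : ℝ) : ℝ :=
  gradE f x - 12 * heav (wfun f) * (x - 1/2) *
    ∫ y in (0:ℝ)..1, (y - 1/2) * gradE f y

/-- `A` has no nonzero eigenvalues: if `λ ≠ 0` and `Af = λf` in `L^p[0,1]`,
then `f = 0`. -/
theorem stmt7 (p : ℝ≥0∞) (hp : 1 ≤ p) (f : ℝ → ℝ) (lam : ℝ) (hlam : lam ≠ 0)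
    (hf : MemLp f p (volume.restrict (Set.Icc (0:ℝ) 1)))
    (heig : Aop f =ᵐ[volume.restrict (Set.Icc (0:ℝ) 1)] (fun x => lam * f x)) :
    f =ᵐ[volume.restrict (Set.Icc (0:ℝ) 1)] (fun _ => (0:ℝ)) := by
  haveI : Fact ((volume : Measure ℝ) (Set.Icc (0:ℝ) 1) < ⊤) := ⟨by simp⟩
  have hfint : IntegrableOn f (Set.Icc (0:ℝ) 1) volume := hf.integrable hp
  set fi : ℝ → ℝ := (Set.Icc (0:ℝ) 1).indicator f with hfi_def
  have hfi : Integrable fi volume := (integrable_indicator_iff measurableSet_Icc).2 hfint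
  set G : ℝ → ℝ := fun x => ∫ t in (0:ℝ)..x, fi t with hG_def
  have hGcont : Continuous G := hfi.continuous_primitive 0
  have hGeq : ∀ x ∈ Set.Icc (0:ℝ) 1, G x = ∫ t in (0:ℝ)..x, f t := by
    intro x hx
    apply intervalIntegral.integral_congr
    intro t ht
    rw [Set.uIcc_of_le hx.1] at ht
    exact Set.indicator_of_mem (show t ∈ Set.Icc (0:ℝ) 1 from ⟨ht.1, ht.2.trans hx.2⟩) f
  have hii : ∀ x ∈ Set.Icc (0:ℝ) 1, ∀ y ∈ Set.Icc (0:ℝ) 1,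
      IntervalIntegrable f volume x y := fun x hx y hy =>
    (hfint.mono_set (Set.uIcc_subset_Icc hx hy)).intervalIntegrable
  have hgrad : ∀ x ∈ Set.Icc (0:ℝ) 1, gradE f x = 2 * G x - G 1 := by
    intro x hx
    have hadd := intervalIntegral.integral_add_adjacent_intervals
      (hii 0 (by norm_num) x hx) (hii x hx 1 (by norm_num))
    rw [gradE, hGeq x hx, hGeq 1 (by norm_num)]
    linarith [hadd]
  set C : ℝ := 12 * heav (wfun f) * ∫ y in (0:ℝ)..1, (y - 1/2) * gradE f y with hC_def
  set g : ℝ → ℝ := fun x => (2 * G x - G 1 - C * (x - 1/2)) / lam with hg_def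
  have hgcont : Continuous g := by
    simp only [hg_def]; fun_prop
  have hfg : f =ᵐ[volume.restrict (Set.Icc (0:ℝ) 1)] g := by
    have hmem : ∀ᵐ x ∂(volume.restrict (Set.Icc (0:ℝ) 1)), x ∈ Set.Icc (0:ℝ) 1 :=
      ae_restrict_mem measurableSet_Icc
    filter_upwards [heig, hmem] with x hx hxm
    have hA : Aop f x = gradE f x - C * (x - 1/2) := by
      rw [hC_def, Aop]; ring
    rw [hA, hgrad x hxm] at hx
    simp only [hg_def]
    field_simp
    linarith [hx]
  set H : ℝ → ℝ := fun x => ∫ t in (0:ℝ)..x, g t with hH_def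
  have hfg' : ∀ᵐ x ∂(volume : Measure ℝ), x ∈ Set.Icc (0:ℝ) 1 → f x = g x :=
    (ae_restrict_iff' measurableSet_Icc).1 hfg
  have hGH : ∀ x ∈ Set.Icc (0:ℝ) 1, G x = H x := by
    intro x hx
    rw [hGeq x hx]
    apply intervalIntegral.integral_congr_ae
    filter_upwards [hfg'] with t ht hmem
    rw [Set.uIoc_of_le hx.1] at hmem
    exact ht ⟨hmem.1.le, hmem.2.trans hx.2⟩
  have hkey : ∀ x ∈ Set.Icc (0:ℝ) 1, lam * g x = 2 * H x - H 1 - C * (x - 1/2) := by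
    intro x hx
    rw [← hGH x hx, ← hGH 1 (by norm_num)]
    simp only [hg_def]
    field_simp
  have hHder : ∀ x : ℝ, HasDerivAt H (g x) x := fun x =>
    (hgcont.integral_hasStrictDerivAt 0 x).hasDerivAt
  have hHcont : Continuous H := by
    rw [continuous_iff_continuousAt]
    exact fun x => (hHder x).continuousAt
  set q : ℝ → ℝ := fun x => 2 * H x - H 1 - C * (x - 1/2) with hq_def
  have hqder : ∀ x : ℝ, HasDerivAt q (2 * g x - C) x := by
    intro x
    have h1 : HasDerivAt (fun x => 2 * H x - H 1) (2 * g x) x :=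
      ((hHder x).const_mul 2).sub_const (H 1)
    have h2 : HasDerivAt (fun x : ℝ => C * (x - 1/2)) C x := by
      simpa using ((hasDerivAt_id x).sub_const (1/2:ℝ)).const_mul C
    exact h1.sub h2
  set h : ℝ → ℝ := fun x => Real.exp (-(2/lam)*x) * (q x - C*lam/2) with hh_def
  have hhder : ∀ x : ℝ, HasDerivAt h
      ((-(2/lam)) * Real.exp (-(2/lam)*x) * (q x - C*lam/2)
        + Real.exp (-(2/lam)*x) * (2 * g x - C)) x := by
    intro x
    have he : HasDerivAt (fun x : ℝ => Real.exp (-(2/lam)*x))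
        ((-(2/lam)) * Real.exp (-(2/lam)*x)) x := by
      have h0 : HasDerivAt (fun x : ℝ => (-(2/lam))*x) (-(2/lam)) x := by
        simpa using (hasDerivAt_id x).const_mul (-(2/lam))
      simpa [mul_comm] using h0.exp
    exact he.mul ((hqder x).sub_const (C*lam/2))
  have hzero : ∀ x ∈ Set.Icc (0:ℝ) 1, HasDerivAt h 0 x := by
    intro x hx
    have h1 := hhder x
    have h2 : q x = lam * g x := (hkey x hx).symm
    have h3 : (-(2/lam)) * Real.exp (-(2/lam)*x) * (q x - C*lam/2)
        + Real.exp (-(2/lam)*x) * (2 * g x - C) = 0 := by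
      rw [h2]; field_simp; ring
    rwa [h3] at h1
  have hconst : ∀ x ∈ Set.Icc (0:ℝ) 1, h x = h 0 := by
    refine constant_of_has_deriv_right_zero ?_
      (fun x hx => (hzero x (Set.Ico_subset_Icc_self hx)).hasDerivWithinAt)
    have : Continuous h := by
      simp only [hh_def, hq_def]
      fun_prop
    exact this.continuousOn
  set a : ℝ := h 0 / lam with ha_def
  have hgform : ∀ x ∈ Set.Icc (0:ℝ) 1, g x = a * Real.exp ((2/lam)*x) + C/2 := by
    intro x hx
    have h1 := hconst x hx
    have hexp : Real.exp (-(2/lam)*x) * Real.exp ((2/lam)*x) = 1 := by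
      rw [← Real.exp_add]; ring_nf; exact Real.exp_zero
    have h0v : h 0 = q 0 - C*lam/2 := by
      simp only [hh_def]; norm_num
    have hq1 : q x = h 0 * Real.exp ((2/lam)*x) + C*lam/2 := by
      have h1' : Real.exp (-(2/lam)*x) * (q x - C*lam/2) = h 0 := h1
      linear_combination Real.exp ((2/lam)*x) * h1' - (q x - C*lam/2) * hexp
    have hk := hkey x hx
    have : lam * g x = lam * (a * Real.exp ((2/lam)*x) + C/2) := by
      rw [hk]
      show q x = _
      rw [hq1, ha_def]
      field_simp
    exact mul_left_cancel₀ hlam this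
  set E1 : ℝ := Real.exp (2/lam) with hE1_def
  have hexpder : ∀ x : ℝ, HasDerivAt (fun x : ℝ => Real.exp ((2/lam)*x))
      ((2/lam) * Real.exp ((2/lam)*x)) x := by
    intro x
    have h0 : HasDerivAt (fun x : ℝ => (2/lam)*x) (2/lam) x := by
      simpa using (hasDerivAt_id x).const_mul (2/lam)
    simpa [mul_comm] using h0.exp
  have hIexp : ∫ x in (0:ℝ)..1, Real.exp ((2/lam)*x) = lam/2 * (E1 - 1) := by
    have hF : ∀ x ∈ Set.uIcc (0:ℝ) 1, HasDerivAt (fun x => lam/2 * Real.exp ((2/lam)*x))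
        (Real.exp ((2/lam)*x)) x := by
      intro x _
      have := (hexpder x).const_mul (lam/2)
      refine this.congr_deriv ?_
      field_simp
    rw [intervalIntegral.integral_eq_sub_of_hasDerivAt hF
      (Continuous.intervalIntegrable (by fun_prop) 0 1)]
    rw [mul_one, mul_zero, Real.exp_zero, hE1_def]
    ring
  have hI2 : ∫ x in (0:ℝ)..1, (x - 1/2) * Real.exp ((2/lam)*x)
      = lam/4 * ((1-lam)*E1 + 1 + lam) := by
    have hF : ∀ x ∈ Set.uIcc (0:ℝ) 1, HasDerivAt
        (fun x => ((x-1/2)*(lam/2) - lam^2/4) * Real.exp ((2/lam)*x))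
        ((x - 1/2) * Real.exp ((2/lam)*x)) x := by
      intro x _
      have hu : HasDerivAt (fun x : ℝ => (x-1/2)*(lam/2) - lam^2/4) (lam/2) x := by
        simpa using (((hasDerivAt_id x).sub_const (1/2:ℝ)).mul_const (lam/2)).sub_const (lam^2/4)
      have := hu.mul (hexpder x)
      refine this.congr_deriv ?_
      field_simp
      ring
    rw [intervalIntegral.integral_eq_sub_of_hasDerivAt hF
      (Continuous.intervalIntegrable (by fun_prop) 0 1)]
    rw [mul_one, mul_zero, Real.exp_zero, hE1_def]
    ring
  have hI3 : ∫ x in (0:ℝ)..1, (x - 1/2 : ℝ) = 0 := by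
    have hF : ∀ x ∈ Set.uIcc (0:ℝ) 1, HasDerivAt (fun x : ℝ => (x-1/2)^2/2) (x - 1/2) x := by
      intro x _
      have := (((hasDerivAt_id x).sub_const (1/2:ℝ)).pow 2).div_const 2
      refine this.congr_deriv ?_
      simp only [id_eq]
      ring
    rw [intervalIntegral.integral_eq_sub_of_hasDerivAt hF
      (Continuous.intervalIntegrable (by fun_prop) 0 1)]
    norm_num
  have hI4 : ∫ x in (0:ℝ)..1, ((x:ℝ) - 1/2) * (x - 1/2) = 1/12 := by
    have hF : ∀ x ∈ Set.uIcc (0:ℝ) 1, HasDerivAt (fun x : ℝ => (x-1/2)^3/3)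
        ((x - 1/2) * (x - 1/2)) x := by
      intro x _
      have := (((hasDerivAt_id x).sub_const (1/2:ℝ)).pow 3).div_const 3
      refine this.congr_deriv ?_
      simp only [id_eq]
      ring
    rw [intervalIntegral.integral_eq_sub_of_hasDerivAt hF
      (Continuous.intervalIntegrable (by fun_prop) 0 1)]
    norm_num
  set J : ℝ := lam/4*((1-lam)*E1+1+lam) with hJ_def
  have hwg : ∫ x in (0:ℝ)..1, (x - 1/2) * g x = a * J := by
    have hcg : ∫ x in (0:ℝ)..1, (x - 1/2) * g x
        = ∫ x in (0:ℝ)..1, (a * ((x-1/2) * Real.exp ((2/lam)*x)) + (C/2) * (x - 1/2)) := by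
      apply intervalIntegral.integral_congr
      intro x hx
      rw [Set.uIcc_of_le (by norm_num : (0:ℝ) ≤ 1)] at hx
      simp only [hgform x hx]
      ring
    rw [hcg, intervalIntegral.integral_add (Continuous.intervalIntegrable (by fun_prop) 0 1)
        (Continuous.intervalIntegrable (by fun_prop) 0 1),
      intervalIntegral.integral_const_mul, intervalIntegral.integral_const_mul, hI2, hI3, hJ_def]
    ring
  have hH1 : H 1 = a * (lam/2*(E1-1)) + C/2 := by
    have hcg : (∫ t in (0:ℝ)..1, g t)
        = ∫ x in (0:ℝ)..1, (a * Real.exp ((2/lam)*x) + C/2) := by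
      apply intervalIntegral.integral_congr
      intro x hx
      rw [Set.uIcc_of_le (by norm_num : (0:ℝ) ≤ 1)] at hx
      exact hgform x hx
    simp only [hH_def]
    rw [hcg, intervalIntegral.integral_add (Continuous.intervalIntegrable (by fun_prop) 0 1)
        intervalIntegrable_const,
      intervalIntegral.integral_const_mul, hIexp, intervalIntegral.integral_const]
    norm_num
  have hg0 := hkey 0 (by norm_num)
  have hH0 : H 0 = 0 := intervalIntegral.integral_same
  have hgz : g 0 = a + C/2 := by
    have := hgform 0 (by norm_num)
    simpa using this
  have hEqA : C = -a * (E1 + 1) := by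
    rw [hgz, hH0, hH1] at hg0
    have h2 : lam * (C - (-a * (E1 + 1))) = lam * 0 := by linear_combination 2 * hg0
    have := mul_left_cancel₀ hlam h2
    linarith
  have hwf : wfun f = a * J := by
    rw [← hwg]
    simp only [wfun]
    apply intervalIntegral.integral_congr_ae
    filter_upwards [hfg'] with t ht hmem
    rw [Set.uIoc_of_le (by norm_num : (0:ℝ) ≤ 1)] at hmem
    rw [ht ⟨hmem.1.le, hmem.2⟩]
  have hIg : (∫ y in (0:ℝ)..1, (y - 1/2) * gradE f y) = lam * (a*J) + C/12 := by
    have hcg : (∫ y in (0:ℝ)..1, (y - 1/2) * gradE f y)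
        = ∫ y in (0:ℝ)..1, (lam * ((y-1/2) * g y) + C * ((y-1/2)*(y-1/2))) := by
      apply intervalIntegral.integral_congr
      intro y hy
      rw [Set.uIcc_of_le (by norm_num : (0:ℝ) ≤ 1)] at hy
      simp only [hgrad y hy, hGH y hy, hGH 1 (by norm_num)]
      have hk := hkey y hy
      clear_value G H g C
      linear_combination (1/2 - y) * hk
    rw [hcg, intervalIntegral.integral_add
        (Continuous.intervalIntegrable (by fun_prop) 0 1)
        (Continuous.intervalIntegrable (by fun_prop) 0 1),
      intervalIntegral.integral_const_mul, intervalIntegral.integral_const_mul, hwg, hI4]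
    ring
  have hCeq : C = 12 * heav (a*J) * (lam*(a*J) + C/12) := by
    have h0 := hC_def
    rw [hIg, hwf] at h0
    exact h0
  have hJne : J ≠ 0 := by
    have hsne : (1:ℝ)/lam ≠ 0 := one_div_ne_zero hlam
    have hphi := phi_ne hsne
    have hE : Real.exp (2 * (1/lam)) = E1 := by
      rw [hE1_def, mul_one_div]
    rw [hE] at hphi
    rw [hJ_def]
    intro hc
    have h : (1-lam)*E1 + 1 + lam = 0 := by
      rcases mul_eq_zero.1 hc with h | h
      · exact absurd h (div_ne_zero hlam (by norm_num))
      · exact h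
    apply hphi
    have h6 : lam * ((1/lam - 1)*E1 + 1/lam + 1) = 0 := by
      field_simp
      linear_combination h
    rcases mul_eq_zero.1 h6 with h' | h'
    · exact absurd h' hlam
    · exact h'
  have haC : a = 0 ∧ C = 0 := by
    by_cases hwp : 0 ≤ a * J
    · have hh1 : heav (a*J) = 1 := if_pos hwp
      rw [hh1] at hCeq
      have hz : lam * (a * J) = 0 := by linarith
      have ha0 : a = 0 := by
        rcases mul_eq_zero.1 hz with h | h
        · exact absurd h hlam
        · rcases mul_eq_zero.1 h with h' | h'
          · exact h'
          · exact absurd h' hJne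
      exact ⟨ha0, by rw [hEqA, ha0]; ring⟩
    · have hh0 : heav (a*J) = 0 := if_neg hwp
      rw [hh0] at hCeq
      simp at hCeq
      have hE1pos : 0 < E1 := Real.exp_pos _
      have h5 : a * (E1 + 1) = 0 := by linear_combination hEqA - hCeq
      have ha0 : a = 0 := by
        rcases mul_eq_zero.1 h5 with h' | h'
        · exact h'
        · exfalso; linarith
      exfalso
      apply hwp
      rw [ha0]
      norm_num
  obtain ⟨ha0, hC0⟩ := haC
  filter_upwards [hfg, ae_restrict_mem measurableSet_Icc] with x hx hxm
  rw [hx, hgform x hxm, ha0, hC0]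
  norm_num
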